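/- Let csi, e_r, e_i, d_r, d_i, g_r, g_i be real numbers, let ξ₂ ∈ ℂ, and let M, ψ be meromorphic on a neighborhood of ξ₂ and satisfy, on a punctured neighborhood of ξ₂, the CGL5 traveling-wave system: M''/(2M) − (M')²/(4M²) − csi·M'/(2M) − ψ² + e_r·M² + d_r·M + g_i = 0 and ψ' + ψ·M'/M − csi·ψ + e_i·M² + d_i·M − g_r = 0. If M is holomorphic at ξ₂ with M(ξ₂) = 0, M is not identically zero, and ψ has a pole at ξ₂, then: the zero of M at ξ₂ is simple; the pole of ψ at ξ₂ is simple; and the residue ρ of ψ at ξ₂ satisfies ρ² = −1/4, i.e. ρ = i/2 or ρ = −i/2. -/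

import Mathlib

open Filter Topology


lemma analyticAt_deriv {f : ℂ → ℂ} {x : ℂ} (h : AnalyticAt ℂ f x) :
    AnalyticAt ℂ (deriv f) x :=
  (AnalyticOnNhd.deriv (fun _ hy => hy : AnalyticOnNhd ℂ f {y | AnalyticAt ℂ f y})) x h

lemma cancel1 (a X : ℂ) (ha : a ≠ 0) : a * X / (2*a) = X/2 := by
  field_simp
lemma cancel2 (a X : ℂ) (ha : a ≠ 0) : (a * X)^2 / (4*a^2) = X^2/4 := by
  field_simp
lemma cancel3 (c a X : ℂ) (ha : a ≠ 0) : c * (a * X) / (2*a) = c * X/2 := by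
  field_simp

lemma key1_algebra (p : ℕ) (csi e_r d_r g_i : ℝ) (t a uu uu' s : ℂ) (ht : t ≠ 0) (ha : a ≠ 0)
    (he1 : a * (((p:ℂ)/t + uu)^2 + (-(p:ℂ)/t^2 + uu')) / (2*a)
      - (a * ((p:ℂ)/t + uu))^2/(4*a^2) - (csi:ℂ) * (a*((p:ℂ)/t+uu))/(2*a)
      - s^2 + (e_r:ℂ)*a^2 + (d_r:ℂ)*a + (g_i:ℂ) = 0) :
    t^2 * s^2 = ((p:ℂ)^2 - 2*(p:ℂ))/4
      + t * ((p:ℂ)*uu/2 + t*(uu'/2 + uu^2/4) - (csi:ℂ)*((p:ℂ) + t*uu)/2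
          + t*((e_r:ℂ)*a^2 + (d_r:ℂ)*a + (g_i:ℂ))) := by
  rw [cancel1 _ _ ha, cancel2 _ _ ha, cancel3 _ _ _ ha] at he1
  have hs : s^2 = (((p:ℂ)/t + uu)^2 + (-(p:ℂ)/t^2 + uu'))/2
      - ((p:ℂ)/t + uu)^2/4 - (csi:ℂ)*((p:ℂ)/t+uu)/2
      + (e_r:ℂ)*a^2 + (d_r:ℂ)*a + (g_i:ℂ) := by linear_combination -he1
  have e1 : (p:ℂ)/t + uu = ((p:ℂ) + uu*t)/t := by field_simp
  have e2 : -(p:ℂ)/t^2 + uu' = (-(p:ℂ) + uu'*t^2)/t^2 := by field_simp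
  rw [e1, e2, div_pow] at hs
  have hs4 : 4*t^2*s^2 = 2*(((p:ℂ) + uu*t)^2 + (-(p:ℂ) + uu'*t^2))
      - ((p:ℂ)+uu*t)^2 - 2*(csi:ℂ)*t*((p:ℂ)+uu*t)
      + 4*t^2*((e_r:ℂ)*a^2+(d_r:ℂ)*a+(g_i:ℂ)) := by
    have ht2 : (t:ℂ)^2 ≠ 0 := pow_ne_zero 2 ht
    have c1 : t^2 * (((p:ℂ) + uu*t)^2 / t^2) = ((p:ℂ)+uu*t)^2 := mul_div_cancel₀ _ ht2
    have c2 : t^2 * ((-(p:ℂ) + uu'*t^2)/t^2) = -(p:ℂ) + uu'*t^2 := mul_div_cancel₀ _ ht2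
    have c3 : t * (((p:ℂ) + uu*t)/t) = (p:ℂ) + uu*t := mul_div_cancel₀ _ ht
    linear_combination 4*t^2*hs + c1 + 2*c2 - 2*(csi:ℂ)*t*c3
  linear_combination hs4 / 4

lemma key2_algebra (p : ℕ) (csi e_i d_i g_r : ℝ) (t a uu b b' : ℂ) (ht : t ≠ 0) (ha : a ≠ 0)
    (he2 : (b'/t - b/t^2) + (b/t) * (a*((p:ℂ)/t + uu)) / a - (csi:ℂ)*(b/t)
      + (e_i:ℂ)*a^2 + (d_i:ℂ)*a - (g_r:ℂ) = 0) :
    ((p:ℂ) - 1) * b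
      + t * (b' + b*uu - (csi:ℂ)*b + t*((e_i:ℂ)*a^2 + (d_i:ℂ)*a - (g_r:ℂ))) = 0 := by
  have hP : (p:ℂ)/t + uu = ((p:ℂ) + uu*t)/t := by field_simp
  have d4 : (b/t)*(a*(((p:ℂ)+uu*t)/t))/a = b*((p:ℂ)+uu*t)/t^2 := by
    field_simp
  rw [hP, d4] at he2
  have ht2 : t^2 ≠ 0 := pow_ne_zero 2 ht
  have d1 : t * (b'/t) = b' := mul_div_cancel₀ _ ht
  have d2 : t^2 * (b/t^2) = b := mul_div_cancel₀ _ ht2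
  have d3 : t * (b/t) = b := mul_div_cancel₀ _ ht
  have d5 : t^2 * (b*((p:ℂ)+uu*t)/t^2) = b*((p:ℂ)+uu*t) := mul_div_cancel₀ _ ht2
  linear_combination t^2*he2 - t*d1 + d2 - d5 + (csi:ℂ)*t*d3

/-- `f` has a pole at `z`. -/
def IsPole (f : ℂ → ℂ) (z : ℂ) : Prop :=
  Tendsto (fun w => ‖f w‖) (𝓝[≠] z) atTop

/-- At a zero `ξ₂` of `M` which is a pole of `ψ`, for a meromorphic solution `(M, ψ)` of
the CGL5 traveling-wave system: the zero of `M` is simple, the pole of `ψ` is simple, and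
the residue `ρ` of `ψ` satisfies `ρ² = −1/4`, i.e. `ρ = ±i/2`. -/
theorem cgl5_second_set_of_singularities
    (csi e_r e_i d_r d_i g_r g_i : ℝ) (ξ₂ : ℂ)
    (M ψ : ℂ → ℂ) (hM : MeromorphicAt M ξ₂) (hψ : MeromorphicAt ψ ξ₂)
    (heq : ∀ᶠ z in 𝓝[≠] ξ₂,
      (deriv (deriv M) z / (2 * M z) - (deriv M z)^2 / (4 * (M z)^2)
        - (csi : ℂ) * deriv M z / (2 * M z) - (ψ z)^2
        + (e_r : ℂ) * (M z)^2 + (d_r : ℂ) * M z + (g_i : ℂ) = 0)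
      ∧ (deriv ψ z + ψ z * deriv M z / M z - (csi : ℂ) * ψ z
        + (e_i : ℂ) * (M z)^2 + (d_i : ℂ) * M z - (g_r : ℂ) = 0))
    (hMa : AnalyticAt ℂ M ξ₂) (hM0 : M ξ₂ = 0)
    (hMne : ¬ (∀ᶠ z in 𝓝 ξ₂, M z = 0))
    (hpole : IsPole ψ ξ₂) :
    deriv M ξ₂ ≠ 0
    ∧ ∃ ρ : ℂ, Tendsto (fun z => (z - ξ₂) * ψ z) (𝓝[≠] ξ₂) (𝓝 ρ)
        ∧ ρ^2 = -(1/4)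
        ∧ (ρ = Complex.I / 2 ∨ ρ = -(Complex.I / 2)) := by
  classical
  -- order of M
  have hMoen : analyticOrderAt M ξ₂ ≠ ⊤ := fun hc => hMne (analyticOrderAt_eq_top.mp hc)
  obtain ⟨p, hp⟩ := ENat.ne_top_iff_exists.mp hMoen
  obtain ⟨g, hg, hgx, hMfac⟩ := (hMa.analyticOrderAt_eq_natCast (n := p)).mp hp.symm
  simp only [smul_eq_mul] at hMfac
  have hp1 : 1 ≤ p := by
    by_contra hc
    have h0 : p = 0 := by omega
    have := hMfac.self_of_nhds
    rw [h0, pow_zero, one_mul, hM0] at this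
    exact hgx this.symm
  -- order of ψ
  have hψoen : meromorphicOrderAt ψ ξ₂ ≠ ⊤ := by
    intro hc
    have h0 := meromorphicOrderAt_eq_top_iff.mp hc
    have h1 : Tendsto (fun w => ‖ψ w‖) (𝓝[≠] ξ₂) (𝓝 0) := by
      refine Tendsto.congr' ?_ tendsto_const_nhds
      filter_upwards [h0] with z hz
      simp [hz]
    exact not_tendsto_atTop_of_tendsto_nhds h1 hpole
  obtain ⟨n, hn⟩ := WithTop.ne_top_iff_exists.mp hψoen
  obtain ⟨h, hh, hhx, hψfac⟩ := (meromorphicOrderAt_eq_int_iff hψ).mp hn.symm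
  simp only [smul_eq_mul] at hψfac
  have hneg : n < 0 := by
    by_contra hcn
    push_neg at hcn
    obtain ⟨m, rfl⟩ := Int.eq_ofNat_of_zero_le hcn
    have hcont : Tendsto (fun z => (z - ξ₂)^(m:ℕ) * h z) (𝓝 ξ₂)
        (𝓝 ((ξ₂ - ξ₂)^(m:ℕ) * h ξ₂)) :=
      (((continuous_id.sub continuous_const).pow m).continuousAt).mul hh.continuousAt
    have hψt : Tendsto ψ (𝓝[≠] ξ₂) (𝓝 ((ξ₂ - ξ₂)^(m:ℕ) * h ξ₂)) := by
      refine Tendsto.congr' ?_ (hcont.mono_left nhdsWithin_le_nhds)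
      filter_upwards [hψfac] with z hz
      rw [hz, zpow_natCast]
    have habs : Tendsto (fun w => ‖ψ w‖) (𝓝[≠] ξ₂)
        (𝓝 ‖(ξ₂ - ξ₂)^(m:ℕ) * h ξ₂‖) :=
      (continuous_norm.continuousAt.tendsto).comp hψt
    exact not_tendsto_atTop_of_tendsto_nhds habs hpole
  set q : ℕ := n.natAbs with hqdef
  have hqn : (q : ℤ) = -n := Int.ofNat_natAbs_of_nonpos hneg.le
  have hq1 : 1 ≤ q := by omega
  -- the logarithmic derivative of g
  set u : ℂ → ℂ := fun z => deriv g z / g z with hudef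
  -- assemble all eventual facts on the punctured neighborhood
  have hgne : ∀ᶠ z in 𝓝 ξ₂, g z ≠ 0 := hg.continuousAt.eventually_ne hgx
  have hhne : ∀ᶠ z in 𝓝 ξ₂, h z ≠ 0 := hh.continuousAt.eventually_ne hhx
  have hbig : ∀ᶠ z in 𝓝[≠] ξ₂, z ≠ ξ₂ ∧ M z = (z - ξ₂)^p * g z
      ∧ h z = (z - ξ₂)^q * ψ z ∧ AnalyticAt ℂ g z ∧ AnalyticAt ℂ h z
      ∧ g z ≠ 0 ∧ h z ≠ 0
      ∧ (deriv (deriv M) z / (2 * M z) - (deriv M z)^2 / (4 * (M z)^2)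
        - (csi : ℂ) * deriv M z / (2 * M z) - (ψ z)^2
        + (e_r : ℂ) * (M z)^2 + (d_r : ℂ) * M z + (g_i : ℂ) = 0)
      ∧ (deriv ψ z + ψ z * deriv M z / M z - (csi : ℂ) * ψ z
        + (e_i : ℂ) * (M z)^2 + (d_i : ℂ) * M z - (g_r : ℂ) = 0) := by
    filter_upwards [self_mem_nhdsWithin, hMfac.filter_mono nhdsWithin_le_nhds,
      hψfac, (hg.eventually_analyticAt).filter_mono nhdsWithin_le_nhds,
      (hh.eventually_analyticAt).filter_mono nhdsWithin_le_nhds,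
      hgne.filter_mono nhdsWithin_le_nhds, hhne.filter_mono nhdsWithin_le_nhds,
      heq] with z hz hMz hψz hgz hhz hgz0 hhz0 heqz
    refine ⟨hz, hMz, ?_, hgz, hhz, hgz0, hhz0, heqz.1, heqz.2⟩
    have htz : z - ξ₂ ≠ 0 := sub_ne_zero.mpr hz
    rw [hψz, ← mul_assoc, ← zpow_natCast (z - ξ₂) q, ← zpow_add₀ htz]
    rw [hqn]
    simp
  -- extract an open set W
  rw [eventually_nhdsWithin_iff] at hbig
  obtain ⟨V, hV, hVo, hVx⟩ := eventually_nhds_iff.mp hbig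
  set W : Set ℂ := V \ {ξ₂} with hWdef
  have hWo : IsOpen W := hVo.sdiff isClosed_singleton
  have hWmem : W ∈ 𝓝[≠] ξ₂ := by
    rw [mem_nhdsWithin]
    exact ⟨V, hVo, hVx, fun x hx => ⟨hx.1, hx.2⟩⟩
  have hWp : ∀ z ∈ W, z ≠ ξ₂ ∧ M z = (z - ξ₂)^p * g z
      ∧ h z = (z - ξ₂)^q * ψ z ∧ AnalyticAt ℂ g z ∧ AnalyticAt ℂ h z
      ∧ g z ≠ 0 ∧ h z ≠ 0
      ∧ (deriv (deriv M) z / (2 * M z) - (deriv M z)^2 / (4 * (M z)^2)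
        - (csi : ℂ) * deriv M z / (2 * M z) - (ψ z)^2
        + (e_r : ℂ) * (M z)^2 + (d_r : ℂ) * M z + (g_i : ℂ) = 0)
      ∧ (deriv ψ z + ψ z * deriv M z / M z - (csi : ℂ) * ψ z
        + (e_i : ℂ) * (M z)^2 + (d_i : ℂ) * M z - (g_r : ℂ) = 0) :=
    fun z hz => hV z hz.1 hz.2
  -- nonvanishing of M on W
  have hMW0 : ∀ z ∈ W, M z ≠ 0 := by
    intro z hz
    obtain ⟨hzne, hMz, -, -, -, hgz0, -⟩ := hWp z hz
    rw [hMz]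
    exact mul_ne_zero (pow_ne_zero _ (sub_ne_zero.mpr hzne)) hgz0
  -- M is analytic on W and its log-derivative is p/t + u
  have hMder : ∀ w ∈ W, AnalyticAt ℂ M w
      ∧ deriv M w = M w * ((p:ℂ)/(w - ξ₂) + u w) := by
    intro w hw
    obtain ⟨hwne, hMw, -, hgw, -, hgw0, -⟩ := hWp w hw
    have htne : w - ξ₂ ≠ 0 := sub_ne_zero.mpr hwne
    have hEq : M =ᶠ[𝓝 w] fun z => (z - ξ₂)^p * g z := by
      filter_upwards [hWo.mem_nhds hw] with z hz
      exact (hWp z hz).2.1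
    have hA : AnalyticAt ℂ (fun z => (z - ξ₂)^p * g z) w :=
      (((analyticAt_id).sub analyticAt_const).pow p).mul hgw
    refine ⟨hA.congr hEq.symm, ?_⟩
    have hd : HasDerivAt (fun z => (z - ξ₂)^p * g z)
        ((p:ℂ) * (w - ξ₂)^(p-1) * 1 * g w + (w - ξ₂)^p * deriv g w) w :=
      HasDerivAt.mul (HasDerivAt.pow ((hasDerivAt_id w).sub_const ξ₂) p)
        hgw.differentiableAt.hasDerivAt
    rw [hEq.deriv_eq, hd.deriv, hMw, hudef]
    have hps : (w - ξ₂)^p = (w - ξ₂)^(p-1) * (w - ξ₂) := by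
      rw [← pow_succ, Nat.sub_add_cancel hp1]
    field_simp
    rw [hps]
    ring
  -- second derivative of M on W
  have hM2der : ∀ w ∈ W, deriv (deriv M) w
      = M w * (((p:ℂ)/(w - ξ₂) + u w)^2 + (-(p:ℂ)/(w - ξ₂)^2 + deriv u w)) := by
    intro w hw
    obtain ⟨hwne, hMw, -, hgw, -, hgw0, -⟩ := hWp w hw
    have htne : w - ξ₂ ≠ 0 := sub_ne_zero.mpr hwne
    have huw : AnalyticAt ℂ u w := (analyticAt_deriv hgw).div hgw hgw0
    have hEq : deriv M =ᶠ[𝓝 w] fun z => M z * ((p:ℂ)/(z - ξ₂) + u z) := by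
      filter_upwards [hWo.mem_nhds hw] with z hz
      exact (hMder z hz).2
    have hd1 : HasDerivAt M (M w * ((p:ℂ)/(w - ξ₂) + u w)) w := by
      have hd := (hMder w hw).1.differentiableAt.hasDerivAt
      rwa [(hMder w hw).2] at hd
    have hdinv : HasDerivAt (fun z => (p:ℂ)/(z - ξ₂)) (-(p:ℂ)/(w - ξ₂)^2) w := by
      have h1 : HasDerivAt (fun z => (z - ξ₂)⁻¹) (-1/(w - ξ₂)^2) w := by
        exact (((hasDerivAt_id w).sub_const ξ₂).inv htne).congr_deriv (by simp)
      have h2 := h1.const_mul (p:ℂ)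
      simp only [div_eq_mul_inv] at h2 ⊢
      exact h2.congr_deriv (by ring)
    have hdP : HasDerivAt (fun z => (p:ℂ)/(z - ξ₂) + u z)
        (-(p:ℂ)/(w - ξ₂)^2 + deriv u w) w :=
      hdinv.add huw.differentiableAt.hasDerivAt
    rw [hEq.deriv_eq, HasDerivAt.deriv (f := fun z => M z * ((p:ℂ)/(z - ξ₂) + u z)) (hd1.mul hdP)]
    ring
  -- the key identity from equation 1
  set cC : ℂ := ((p:ℂ)^2 - 2*(p:ℂ))/4 with hcCdef
  set R : ℂ → ℂ := fun z => (p:ℂ) * u z/2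
      + (z - ξ₂)*(deriv u z/2 + (u z)^2/4)
      - (csi:ℂ)*((p:ℂ) + (z - ξ₂)*u z)/2
      + (z - ξ₂)*((e_r:ℂ)*(M z)^2 + (d_r:ℂ)*(M z) + (g_i:ℂ)) with hRdef
  have hkey1 : ∀ w ∈ W, (w - ξ₂)^2 * (ψ w)^2 = cC + (w - ξ₂) * R w := by
    intro w hw
    obtain ⟨hwne, hMw, -, -, -, hgw0, -, he1, -⟩ := hWp w hw
    have htne : w - ξ₂ ≠ 0 := sub_ne_zero.mpr hwne
    have hMne0 : M w ≠ 0 := hMW0 w hw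
    rw [hM2der w hw, (hMder w hw).2] at he1
    simp only [hcCdef, hRdef]
    exact key1_algebra p csi e_r d_r g_i (w - ξ₂) (M w) (u w) (deriv u w) (ψ w) htne hMne0 he1
  have hRcont : ContinuousAt R ξ₂ := by
    have hu : AnalyticAt ℂ u ξ₂ := (analyticAt_deriv hg).div hg hgx
    have hu' : AnalyticAt ℂ (deriv u) ξ₂ := analyticAt_deriv hu
    have c1 : ContinuousAt u ξ₂ := hu.continuousAt
    have c2 : ContinuousAt (deriv u) ξ₂ := hu'.continuousAt
    have c3 : ContinuousAt M ξ₂ := hMa.continuousAt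
    have ct : ContinuousAt (fun z : ℂ => z - ξ₂) ξ₂ :=
      (continuous_id.sub continuous_const).continuousAt
    rw [hRdef]
    fun_prop
  have hE : Tendsto (fun z => (z - ξ₂)^2 * (ψ z)^2) (𝓝[≠] ξ₂) (𝓝 cC) := by
    have h1 : Tendsto (fun z => cC + (z - ξ₂) * R z) (𝓝 ξ₂)
        (𝓝 (cC + (ξ₂ - ξ₂) * R ξ₂)) :=
      tendsto_const_nhds.add
        (((continuous_id.sub continuous_const).continuousAt).mul hRcont)
    rw [show cC + (ξ₂ - ξ₂) * R ξ₂ = cC by ring_nf] at h1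
    refine Tendsto.congr' ?_ (h1.mono_left nhdsWithin_le_nhds)
    filter_upwards [hWmem] with z hz
    exact (hkey1 z hz).symm
  -- limit of h^2 along the punctured neighborhood
  have hhlim : Tendsto (fun z => (h z)^2) (𝓝[≠] ξ₂) (𝓝 ((h ξ₂)^2)) :=
    ((hh.continuousAt.pow 2).tendsto).mono_left nhdsWithin_le_nhds
  -- q = 1
  have hqone : q = 1 := by
    by_contra hq'
    have hq2 : 2 ≤ q := by omega
    have hfac2 : ∀ w ∈ W, (h w)^2
        = (w - ξ₂)^(2*q - 2) * ((w - ξ₂)^2 * (ψ w)^2) := by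
      intro w hw
      obtain ⟨hwne, -, hhw, -⟩ := hWp w hw
      rw [hhw, mul_pow, ← pow_mul, ← mul_assoc, ← pow_add]
      congr 2
      omega
    have hlim0 : Tendsto (fun z => (z - ξ₂)^(2*q - 2) * ((z - ξ₂)^2 * (ψ z)^2))
        (𝓝[≠] ξ₂) (𝓝 0) := by
      have hpow : Tendsto (fun z : ℂ => (z - ξ₂)^(2*q - 2)) (𝓝[≠] ξ₂) (𝓝 0) := by
        have : Tendsto (fun z : ℂ => (z - ξ₂)^(2*q - 2)) (𝓝 ξ₂)
            (𝓝 ((ξ₂ - ξ₂)^(2*q - 2))) :=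
          ((continuous_id.sub continuous_const).pow _).continuousAt
        rw [sub_self, zero_pow (by omega : 2*q - 2 ≠ 0)] at this
        exact this.mono_left nhdsWithin_le_nhds
      simpa using hpow.mul hE
    have huniq := tendsto_nhds_unique
      (hhlim.congr' (by filter_upwards [hWmem] with z hz; exact hfac2 z hz)) hlim0
    exact pow_ne_zero 2 hhx huniq
  -- with q = 1 : h z = (z - ξ₂) * ψ z on W, and (h ξ₂)^2 = cC
  have hhW : ∀ w ∈ W, h w = (w - ξ₂) * ψ w := by
    intro w hw
    have := (hWp w hw).2.2.1
    rwa [hqone, pow_one] at this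
  have hb2 : (h ξ₂)^2 = cC := by
    refine tendsto_nhds_unique (hhlim.congr' ?_) hE
    filter_upwards [hWmem] with z hz
    rw [hhW z hz, mul_pow]
  -- derivative of ψ on W
  have hψder : ∀ w ∈ W, deriv ψ w = deriv h w/(w - ξ₂) - h w/(w - ξ₂)^2 := by
    intro w hw
    obtain ⟨hwne, -, -, -, hha, -⟩ := hWp w hw
    have htne : w - ξ₂ ≠ 0 := sub_ne_zero.mpr hwne
    have hEq : ψ =ᶠ[𝓝 w] fun z => (z - ξ₂)⁻¹ * h z := by
      filter_upwards [hWo.mem_nhds hw] with z hz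
      have hz2 : z - ξ₂ ≠ 0 := sub_ne_zero.mpr (hWp z hz).1
      rw [hhW z hz, ← mul_assoc, inv_mul_cancel₀ hz2, one_mul]
    have hd : HasDerivAt (fun z => (z - ξ₂)⁻¹ * h z)
        ((-1/(w - ξ₂)^2) * h w + (w - ξ₂)⁻¹ * deriv h w) w := by
      have h1 : HasDerivAt (fun z : ℂ => (z - ξ₂)⁻¹) (-1/(w - ξ₂)^2) w := by
        exact (((hasDerivAt_id w).sub_const ξ₂).inv htne).congr_deriv (by simp)
      exact h1.mul hha.differentiableAt.hasDerivAt
    rw [hEq.deriv_eq, hd.deriv]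
    field_simp
    ring
  -- key identity from equation 2
  set S : ℂ → ℂ := fun z => deriv h z + h z * u z - (csi:ℂ) * h z
      + (z - ξ₂)*((e_i:ℂ)*(M z)^2 + (d_i:ℂ)*(M z) - (g_r:ℂ)) with hSdef
  have hkey2 : ∀ w ∈ W, ((p:ℂ) - 1) * h w + (w - ξ₂) * S w = 0 := by
    intro w hw
    obtain ⟨hwne, -, -, -, -, -, -, -, he2⟩ := hWp w hw
    have htne : w - ξ₂ ≠ 0 := sub_ne_zero.mpr hwne
    have hMne0 := hMW0 w hw
    have hψw : ψ w = h w / (w - ξ₂) := by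
      rw [hhW w hw, mul_comm, mul_div_assoc, div_self htne, mul_one]
    rw [hψder w hw, hψw, (hMder w hw).2] at he2
    simp only [hSdef]
    exact key2_algebra p csi e_i d_i g_r (w - ξ₂) (M w) (u w) (h w) (deriv h w)
      htne hMne0 he2
  have hScont : ContinuousAt S ξ₂ := by
    have hu : AnalyticAt ℂ u ξ₂ := (analyticAt_deriv hg).div hg hgx
    have c1 : ContinuousAt u ξ₂ := hu.continuousAt
    have c2 : ContinuousAt (deriv h) ξ₂ := (analyticAt_deriv hh).continuousAt
    have c3 : ContinuousAt M ξ₂ := hMa.continuousAt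
    have c4 : ContinuousAt h ξ₂ := hh.continuousAt
    rw [hSdef]
    fun_prop
  -- p = 1
  have hpone : p = 1 := by
    have hlim : Tendsto (fun z => ((p:ℂ) - 1) * h z + (z - ξ₂) * S z) (𝓝[≠] ξ₂)
        (𝓝 (((p:ℂ) - 1) * h ξ₂ + (ξ₂ - ξ₂) * S ξ₂)) :=
      ((tendsto_const_nhds.mul hh.continuousAt.tendsto).add
        (((continuous_id.sub continuous_const).continuousAt).mul hScont)).mono_left
        nhdsWithin_le_nhds
    have hzero : Tendsto (fun z => ((p:ℂ) - 1) * h z + (z - ξ₂) * S z) (𝓝[≠] ξ₂)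
        (𝓝 0) := by
      refine Tendsto.congr' ?_ tendsto_const_nhds
      filter_upwards [hWmem] with z hz
      exact (hkey2 z hz).symm
    have huniq := tendsto_nhds_unique hlim hzero
    rw [sub_self, zero_mul, add_zero] at huniq
    rcases mul_eq_zero.mp huniq with h1 | h1
    · have : (p:ℂ) = 1 := by linear_combination h1
      exact_mod_cast this
    · exact absurd h1 hhx
  -- conclusions
  have hdM : deriv M ξ₂ = g ξ₂ := by
    have hEq : M =ᶠ[𝓝 ξ₂] fun z => (z - ξ₂) * g z := by
      filter_upwards [hMfac] with z hz
      rw [hz, hpone, pow_one]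
    have hd : HasDerivAt (fun z => (z - ξ₂) * g z)
        (1 * g ξ₂ + (ξ₂ - ξ₂) * deriv g ξ₂) ξ₂ :=
      ((hasDerivAt_id ξ₂).sub_const ξ₂).mul hg.differentiableAt.hasDerivAt
    rw [hEq.deriv_eq, hd.deriv]
    ring
  have hρ2 : (h ξ₂)^2 = -(1/4) := by
    rw [hb2, hcCdef, hpone]
    norm_num
  refine ⟨by rw [hdM]; exact hgx, h ξ₂, ?_, hρ2, ?_⟩
  · refine Tendsto.congr' ?_ (hh.continuousAt.tendsto.mono_left nhdsWithin_le_nhds)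
    filter_upwards [hWmem] with z hz
    exact hhW z hz
  · have hfact : (h ξ₂ - Complex.I/2) * (h ξ₂ + Complex.I/2) = 0 := by
      have hI := Complex.I_sq
      linear_combination hρ2 - (1/4 : ℂ) * hI
    rcases mul_eq_zero.mp hfact with h1 | h1
    · exact Or.inl (by linear_combination h1)
    · exact Or.inr (by linear_combination h1)
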